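/- For every density matrix ρ on ℂ^d, M_Re(ρ) ≤ M_g(ρ), and equality M_Re(ρ) = M_g(ρ) holds if and only if ρ = ρ*, i.e. if and only if ρ is real. -/

import Mathlib

open Matrix Complex ComplexOrder Classical

/-- The positive semidefinite square root of a matrix (junk value `0` if not PSD). -/
noncomputable def psqrt {n : Type*} [Fintype n] [DecidableEq n] (A : Matrix n n ℂ) :
    Matrix n n ℂ :=
  if h : A.PosSemidef then
    h.1.eigenvectorUnitary.1 * diagonal ((↑) ∘ (√·) ∘ h.1.eigenvalues) *
      (star h.1.eigenvectorUnitary : Matrix n n ℂ) else 0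

/-- Entrywise complex conjugate of a matrix. -/
def mconj {m n : Type*} (A : Matrix m n ℂ) : Matrix m n ℂ := A.map (starRingEnd ℂ)

/-- Fidelity `F(ρ,σ) = Tr √(√ρ σ √ρ)`. -/
noncomputable def fidelity {n : Type*} [Fintype n] [DecidableEq n] (ρ σ : Matrix n n ℂ) : ℝ :=
  ((psqrt (psqrt ρ * σ * psqrt ρ)).trace).re

/-- The real part state `Re(ρ) = (ρ + ρ*)/2`. -/
noncomputable def reState {n : Type*} (ρ : Matrix n n ℂ) : Matrix n n ℂ :=
  ((1 : ℂ)/2) • (ρ + mconj ρ)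

/-- The imaginarity measure `M_Re(ρ) = 1 - F(ρ, Re(ρ))`. -/
noncomputable def MRe {n : Type*} [Fintype n] [DecidableEq n] (ρ : Matrix n n ℂ) : ℝ :=
  1 - fidelity ρ (reState ρ)

/-- A density matrix: positive semidefinite with trace 1. -/
def IsDensityMatrix {n : Type*} [Fintype n] (ρ : Matrix n n ℂ) : Prop :=
  ρ.PosSemidef ∧ ρ.trace = 1

/-- The geometric imaginarity `M_g(ρ) = (1/2)(1 - F(ρ, ρ*))`. -/
noncomputable def Mg {n : Type*} [Fintype n] [DecidableEq n] (ρ : Matrix n n ℂ) : ℝ :=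
  (1/2) * (1 - fidelity ρ (mconj ρ))

open scoped MatrixOrder

private lemma psqrt_of_psd {n : Type*} [Fintype n] [DecidableEq n] {A : Matrix n n ℂ}
    (hA : A.PosSemidef) : psqrt A = CFC.sqrt A := by
  rw [psqrt, dif_pos hA, CFC.sqrt_eq_cfc, cfc_nnreal_eq_real _ A (nonneg_iff_posSemidef.mpr hA),
    hA.1.cfc_eq]
  simp only [IsHermitian.cfc, Unitary.conjStarAlgAut_apply]
  congr 3
  funext i
  simp [Real.coe_sqrt, Real.coe_toNNReal', hA.eigenvalues_nonneg i]

private lemma smul_psd {n : Type*} [Fintype n] {A : Matrix n n ℂ} (hA : A.PosSemidef)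
    {r : ℝ} (hr : 0 ≤ r) : ((r : ℂ) • A).PosSemidef := by
  exact hA.smul (by exact_mod_cast Complex.zero_le_real.mpr hr)

private lemma trace_psqrt {n : Type*} [Fintype n] [DecidableEq n] {A : Matrix n n ℂ}
    (hA : A.PosSemidef) :
    (psqrt A).trace = ((∑ i, Real.sqrt (hA.1.eigenvalues i) : ℝ) : ℂ) := by
  rw [psqrt, dif_pos hA]
  rw [Matrix.trace_mul_cycle,
    show (star hA.1.eigenvectorUnitary : Matrix n n ℂ) * hA.1.eigenvectorUnitary.1 = 1 from
      Matrix.mem_unitaryGroup_iff'.mp hA.1.eigenvectorUnitary.2,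
    one_mul, trace_diagonal]
  push_cast
  rfl

private lemma jensen_sqrt {n : Type*} [Fintype n] (a p : n → ℝ) (ha : ∀ j, 0 ≤ a j)
    (hp : ∀ j, 0 ≤ p j) (hp1 : ∑ j, p j = 1) :
    ∑ j, Real.sqrt (a j) * p j ≤ Real.sqrt (∑ j, a j * p j) := by
  have h1 : 0 ≤ ∑ j, Real.sqrt (a j) * p j :=
    Finset.sum_nonneg fun j _ => mul_nonneg (Real.sqrt_nonneg _) (hp j)
  rw [show (∑ j, Real.sqrt (a j) * p j) = ∑ j, (Real.sqrt (a j) * Real.sqrt (p j)) * Real.sqrt (p j)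
    from Finset.sum_congr rfl fun j _ => by rw [mul_assoc, Real.mul_self_sqrt (hp j)]]
  refine Real.le_sqrt_of_sq_le ?_
  calc (∑ j, Real.sqrt (a j) * Real.sqrt (p j) * Real.sqrt (p j)) ^ 2
      ≤ (∑ j, (Real.sqrt (a j) * Real.sqrt (p j)) ^ 2) * ∑ j, Real.sqrt (p j) ^ 2 :=
        Finset.sum_mul_sq_le_sq_mul_sq _ _ _
    _ = ∑ j, a j * p j := by
        simp only [mul_pow, Real.sq_sqrt (ha _), Real.sq_sqrt (hp _), hp1, mul_one]

private lemma sqrt_avg {a b : ℝ} (ha : 0 ≤ a) (hb : 0 ≤ b) :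
    Real.sqrt a + Real.sqrt b ≤ 2 * Real.sqrt ((a + b) / 2) ∧
      (Real.sqrt a + Real.sqrt b = 2 * Real.sqrt ((a + b) / 2) → a = b) := by
  have h2 : Real.sqrt ((a+b)/2) ^ 2 = (a+b)/2 := Real.sq_sqrt (by positivity)
  have h3 : Real.sqrt a ^ 2 = a := Real.sq_sqrt ha
  have h4 : Real.sqrt b ^ 2 = b := Real.sq_sqrt hb
  have key : (Real.sqrt a + Real.sqrt b)^2 + (Real.sqrt a - Real.sqrt b)^2
      = (2 * Real.sqrt ((a+b)/2))^2 := by nlinarith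
  have hle : Real.sqrt a + Real.sqrt b ≤ 2 * Real.sqrt ((a+b)/2) := by
    have := sq_nonneg (Real.sqrt a - Real.sqrt b)
    nlinarith [Real.sqrt_nonneg a, Real.sqrt_nonneg b, Real.sqrt_nonneg ((a+b)/2)]
  refine ⟨hle, fun h => ?_⟩
  have h5 : (Real.sqrt a - Real.sqrt b)^2 = 0 := by rw [h] at key; linarith
  have h6 : Real.sqrt a = Real.sqrt b := by nlinarith [sq_nonneg (Real.sqrt a - Real.sqrt b)]
  rw [← h3, ← h4, h6]

private lemma diag_entry_quadform {n : Type*} [Fintype n] (A u : Matrix n n ℂ) (i : n) :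
    (star u * A * u) i i = dotProduct (star fun k => u k i) (A *ᵥ fun k => u k i) := by
  simp only [Matrix.mul_apply, dotProduct, Matrix.mulVec, Matrix.conjTranspose_apply,
    Pi.star_apply, Finset.sum_mul, Finset.mul_sum, Matrix.star_apply]
  rw [Finset.sum_comm]
  refine Finset.sum_congr rfl fun k _ => Finset.sum_congr rfl fun j _ => by ring

private lemma peierls {n : Type*} [Fintype n] [DecidableEq n] {A : Matrix n n ℂ}
    (hA : A.PosSemidef) {u : Matrix n n ℂ} (hu : u ∈ Matrix.unitaryGroup n ℂ) :
    (psqrt A).trace.re ≤ ∑ i, Real.sqrt (((star u * A * u) i i).re) := by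
  classical
  set W : Matrix n n ℂ := (hA.1.eigenvectorUnitary : Matrix n n ℂ) with hW
  set a : n → ℝ := hA.1.eigenvalues with haa
  have ha : ∀ j, 0 ≤ a j := hA.eigenvalues_nonneg
  set M : Matrix n n ℂ := star u * W with hM
  have hWu : W ∈ Matrix.unitaryGroup n ℂ := hA.1.eigenvectorUnitary.2
  have hMmem : M ∈ Matrix.unitaryGroup n ℂ := mul_mem (Unitary.star_mem hu) hWu
  set p : n → n → ℝ := fun i j => Complex.normSq (M i j) with hp
  have hpnn : ∀ i j, 0 ≤ p i j := fun i j => Complex.normSq_nonneg _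
  have hrow : ∀ i, ∑ j, p i j = 1 := by
    intro i
    have h1 : (M * star M) i i = 1 := by
      rw [Matrix.mem_unitaryGroup_iff.mp hMmem]; simp [Matrix.one_apply]
    have h2 : (M * star M) i i = ((∑ j, p i j : ℝ) : ℂ) := by
      rw [Matrix.mul_apply]; push_cast
      exact Finset.sum_congr rfl fun j _ => by
        simp [Matrix.conjTranspose_apply, ← Complex.mul_conj, hp]
    rw [h1] at h2
    exact_mod_cast h2.symm
  have hcol : ∀ j, ∑ i, p i j = 1 := by
    intro j
    have h1 : (star M * M) j j = 1 := by
      rw [Matrix.mem_unitaryGroup_iff'.mp hMmem]; simp [Matrix.one_apply]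
    have h2 : (star M * M) j j = ((∑ i, p i j : ℝ) : ℂ) := by
      rw [Matrix.mul_apply]; push_cast
      exact Finset.sum_congr rfl fun i _ => by
        rw [Matrix.star_apply, mul_comm, ← Complex.mul_conj]
        simp [hp]
    rw [h1] at h2
    exact_mod_cast h2.symm
  have hdiag : ∀ i, ((star u * A * u) i i) = ((∑ j, a j * p i j : ℝ) : ℂ) := by
    intro i
    have hrew : star u * A * u = M * diagonal (RCLike.ofReal ∘ a) * star M := by
      conv_lhs => rw [hA.1.spectral_theorem, Unitary.conjStarAlgAut_apply]
      simp only [hM, hW, Matrix.star_mul, star_star, Matrix.mul_assoc]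
      rfl
    rw [hrew, Matrix.mul_apply]
    push_cast
    refine Finset.sum_congr rfl fun j _ => ?_
    rw [Matrix.mul_diagonal, Matrix.star_apply]
    have hco : ((RCLike.ofReal ∘ a) j : ℂ) = ((a j : ℝ) : ℂ) := rfl
    rw [hco]
    have : M i j * ((a j : ℝ) : ℂ) * star (M i j)
        = ((a j : ℂ)) * (M i j * star (M i j)) := by ring
    rw [this, Complex.star_def, Complex.mul_conj]
  have htr : (psqrt A).trace.re = ∑ j, Real.sqrt (a j) := by
    rw [trace_psqrt hA]; exact Complex.ofReal_re _
  rw [htr]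
  calc ∑ j, Real.sqrt (a j) = ∑ j, Real.sqrt (a j) * ∑ i, p i j := by
        simp [hcol]
    _ = ∑ i, ∑ j, Real.sqrt (a j) * p i j := by
        rw [Finset.sum_comm]
        exact Finset.sum_congr rfl fun j _ => Finset.mul_sum _ _ _
    _ ≤ ∑ i, Real.sqrt (∑ j, a j * p i j) :=
        Finset.sum_le_sum fun i _ => jensen_sqrt a (p i) ha (hpnn i) (hrow i)
    _ = ∑ i, Real.sqrt (((star u * A * u) i i).re) := by
        refine Finset.sum_congr rfl fun i _ => ?_
        rw [hdiag i, Complex.ofReal_re]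

private lemma trace_re_eq_sum_diag {n : Type*} [Fintype n] [DecidableEq n] (A u : Matrix n n ℂ)
    (hu : u ∈ Matrix.unitaryGroup n ℂ) :
    A.trace.re = ∑ i, ((star u * A * u) i i).re := by
  have h : (star u * A * u).trace = A.trace := by
    rw [Matrix.trace_mul_cycle, Matrix.mem_unitaryGroup_iff.mp hu, one_mul]
  rw [← h, Matrix.trace]
  exact (Complex.re_sum _ _)

private lemma key {n : Type*} [Fintype n] [DecidableEq n] {A B : Matrix n n ℂ}
    (hA : A.PosSemidef) (hB : B.PosSemidef) :
    (psqrt A).trace.re + (psqrt B).trace.re ≤ 2 * (psqrt (((1:ℂ)/2) • (A + B))).trace.re ∧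
      ((psqrt A).trace.re + (psqrt B).trace.re = 2 * (psqrt (((1:ℂ)/2) • (A + B))).trace.re →
        A.trace.re = B.trace.re) := by
  classical
  set C : Matrix n n ℂ := ((1:ℂ)/2) • (A + B) with hCdef
  have hC : C.PosSemidef := by
    have h12 : ((1:ℂ)/2) = (((1:ℝ)/2 : ℝ) : ℂ) := by norm_num
    rw [hCdef, h12]
    exact smul_psd (hA.add hB) (by norm_num)
  set u : Matrix n n ℂ := (hC.1.eigenvectorUnitary : Matrix n n ℂ) with hu
  have humem : u ∈ Matrix.unitaryGroup n ℂ := hC.1.eigenvectorUnitary.2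
  set c : n → ℝ := hC.1.eigenvalues with hc
  set α : n → ℝ := fun i => ((star u * A * u) i i).re with hα
  set β : n → ℝ := fun i => ((star u * B * u) i i).re with hβ
  have hα0 : ∀ i, 0 ≤ α i := fun i => by
    rw [hα]; dsimp only; rw [diag_entry_quadform]; exact hA.re_dotProduct_nonneg _
  have hβ0 : ∀ i, 0 ≤ β i := fun i => by
    rw [hβ]; dsimp only; rw [diag_entry_quadform]; exact hB.re_dotProduct_nonneg _
  have hαβ : ∀ i, c i = (α i + β i) / 2 := by
    intro i
    have hd : star u * C * u = diagonal (RCLike.ofReal ∘ c) := by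
      have hUU : star u * u = 1 := Matrix.mem_unitaryGroup_iff'.mp humem
      conv_lhs => rw [hC.1.spectral_theorem, Unitary.conjStarAlgAut_apply]
      change star u * (u * diagonal (RCLike.ofReal ∘ c) * star u) * u = _
      rw [← Matrix.mul_assoc, ← Matrix.mul_assoc, hUU, Matrix.one_mul, Matrix.mul_assoc, hUU,
        Matrix.mul_one]
    have hsplit : star u * C * u = ((1:ℂ)/2) • (star u * A * u + star u * B * u) := by
      rw [hCdef]
      simp only [Matrix.mul_smul, Matrix.smul_mul, Matrix.mul_add, Matrix.add_mul]
    have := hd.symm.trans hsplit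
    have hii := congrArg (fun X : Matrix n n ℂ => (X i i).re) this
    simp only [Matrix.diagonal_apply_eq, Matrix.smul_apply, Matrix.add_apply] at hii
    have : ((RCLike.ofReal ∘ c) i : ℂ) = ((c i : ℝ) : ℂ) := rfl
    rw [this] at hii
    rw [Complex.ofReal_re] at hii
    have h12 : ((1:ℂ)/2) = (((1:ℝ)/2 : ℝ) : ℂ) := by norm_num
    rw [hii, h12, smul_eq_mul, Complex.re_ofReal_mul, Complex.add_re]
    rw [hα, hβ]
    ring
  have hc0 : ∀ i, 0 ≤ c i := hC.eigenvalues_nonneg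
  have htrC : (psqrt C).trace.re = ∑ i, Real.sqrt (c i) := by
    rw [trace_psqrt hC]; exact Complex.ofReal_re _
  have hstep : ∀ i, Real.sqrt (α i) + Real.sqrt (β i) ≤ 2 * Real.sqrt (c i) := fun i => by
    rw [hαβ i]; exact (sqrt_avg (hα0 i) (hβ0 i)).1
  have hPA := peierls hA humem
  have hPB := peierls hB humem
  have hsum : (∑ i, (Real.sqrt (α i) + Real.sqrt (β i))) ≤ ∑ i, 2 * Real.sqrt (c i) :=
    Finset.sum_le_sum fun i _ => hstep i
  have hmain : (psqrt A).trace.re + (psqrt B).trace.re ≤ 2 * (psqrt C).trace.re := by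
    rw [htrC, Finset.mul_sum]
    calc (psqrt A).trace.re + (psqrt B).trace.re
        ≤ (∑ i, Real.sqrt (α i)) + ∑ i, Real.sqrt (β i) := add_le_add hPA hPB
      _ = ∑ i, (Real.sqrt (α i) + Real.sqrt (β i)) := (Finset.sum_add_distrib).symm
      _ ≤ ∑ i, 2 * Real.sqrt (c i) := hsum
  refine ⟨hmain, fun heq => ?_⟩
  have h1 : (∑ i, (Real.sqrt (α i) + Real.sqrt (β i))) = ∑ i, 2 * Real.sqrt (c i) := by
    have hge : (psqrt A).trace.re + (psqrt B).trace.re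
        ≤ ∑ i, (Real.sqrt (α i) + Real.sqrt (β i)) := by
      rw [Finset.sum_add_distrib]; exact add_le_add hPA hPB
    rw [htrC, Finset.mul_sum] at heq
    linarith
  have h2 : ∀ i ∈ Finset.univ, Real.sqrt (α i) + Real.sqrt (β i) = 2 * Real.sqrt (c i) :=
    (Finset.sum_eq_sum_iff_of_le fun i _ => hstep i).mp h1
  have h3 : ∀ i, α i = β i := by
    intro i
    have := h2 i (Finset.mem_univ i)
    rw [hαβ i] at this
    exact (sqrt_avg (hα0 i) (hβ0 i)).2 this
  rw [trace_re_eq_sum_diag A u humem, trace_re_eq_sum_diag B u humem]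
  exact Finset.sum_congr rfl fun i _ => h3 i

private lemma trace_mconj {m : Type*} [Fintype m] (A : Matrix m m ℂ) :
    (mconj A).trace = (starRingEnd ℂ) A.trace := by
  simp [mconj, Matrix.trace, Matrix.diag, map_sum]

private lemma mconj_mul {m : Type*} [Fintype m] (A B : Matrix m m ℂ) :
    mconj (A * B) = mconj A * mconj B := by
  ext i j
  simp [mconj, Matrix.mul_apply, map_sum]

theorem stmt7 (d : ℕ) (ρ : Matrix (Fin d) (Fin d) ℂ) (hρ : IsDensityMatrix ρ) :
    MRe ρ ≤ Mg ρ ∧ (MRe ρ = Mg ρ ↔ ρ = mconj ρ) := by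
  obtain ⟨h1, h2⟩ := hρ
  set s : Matrix (Fin d) (Fin d) ℂ := psqrt ρ with hsdef
  have hs : s = CFC.sqrt ρ := psqrt_of_psd h1
  have hsPSD : s.PosSemidef := hs ▸ nonneg_iff_posSemidef.mp (CFC.sqrt_nonneg ρ)
  have hss : s * s = ρ := hs ▸ CFC.sqrt_mul_sqrt_self ρ (nonneg_iff_posSemidef.mpr h1)
  have hmc : mconj ρ = ρᵀ := by
    ext i j
    have := congrFun (congrFun h1.1 i) j
    simp only [Matrix.conjTranspose_apply] at this
    simp [mconj, Matrix.transpose_apply, ← this]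
  have hconjPSD : (mconj ρ).PosSemidef := hmc ▸ h1.transpose
  have hA : (s * ρ * s).PosSemidef := by
    have := h1.conjTranspose_mul_mul_same s
    rwa [hsPSD.1] at this
  have hB : (s * mconj ρ * s).PosSemidef := by
    have := hconjPSD.conjTranspose_mul_mul_same s
    rwa [hsPSD.1] at this
  -- F(ρ,ρ) component: trace of psqrt (s ρ s) is 1
  have hsq : ρ ^ 2 = s * ρ * s := by
    rw [pow_two]
    conv_lhs => rw [← hss]
    rw [Matrix.mul_assoc, Matrix.mul_assoc, ← Matrix.mul_assoc s s s, hss]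
  have hfA : (psqrt (s * ρ * s)).trace.re = 1 := by
    rw [psqrt_of_psd hA, ← hsq, CFC.sqrt_sq ρ (nonneg_iff_posSemidef.mpr h1), h2]
    simp
  -- fidelity rewrites
  have e1 : fidelity ρ (reState ρ)
      = (psqrt (((1:ℂ)/2) • (s * ρ * s + s * mconj ρ * s))).trace.re := by
    unfold fidelity reState
    rw [← hsdef]
    congr 2
    simp only [Matrix.mul_smul, Matrix.smul_mul, Matrix.mul_add, Matrix.add_mul]
  have e2 : fidelity ρ (mconj ρ) = (psqrt (s * mconj ρ * s)).trace.re := by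
    unfold fidelity; rw [← hsdef]
  have hkey := key hA hB
  have hineq : MRe ρ ≤ Mg ρ := by
    unfold MRe Mg
    rw [e1, e2]
    have := hkey.1
    rw [hfA] at this
    linarith
  refine ⟨hineq, ⟨fun heq => ?_, fun heq => ?_⟩⟩
  · -- equality ⇒ real
    have htre : (s * ρ * s).trace.re = (s * mconj ρ * s).trace.re := by
      apply hkey.2
      unfold MRe Mg at heq
      rw [e1, e2] at heq
      rw [hfA]
      linarith
    -- convert to traces of products
    have t1 : (s * ρ * s).trace = (ρ * ρ).trace := by
      rw [Matrix.trace_mul_cycle, hss]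
    have t2 : (s * mconj ρ * s).trace = (mconj ρ * ρ).trace := by
      rw [Matrix.trace_mul_cycle, hss, Matrix.trace_mul_comm]
    rw [t1, t2] at htre
    -- D = ρ - mconj ρ; show ∑ normSq = 0
    set D : Matrix (Fin d) (Fin d) ℂ := ρ - mconj ρ with hD
    have hDD : ∀ i j, D j i = (starRingEnd ℂ) (D i j) := by
      intro i j
      have hherm := congrFun (congrFun h1.1 j) i
      simp only [Matrix.conjTranspose_apply] at hherm
      simp only [hD, Matrix.sub_apply, mconj, Matrix.map_apply, map_sub, RingHomCompTriple.comp_apply]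
      rw [← hherm]
      simp
    have htrDD : (D * D).trace.re = 0 := by
      have expand : (D * D).trace
          = (ρ * ρ).trace - (ρ * mconj ρ).trace - (mconj ρ * ρ).trace
            + (mconj ρ * mconj ρ).trace := by
        rw [hD]
        simp only [Matrix.sub_mul, Matrix.mul_sub, Matrix.trace_sub]
        ring
      have c1 : (mconj ρ * mconj ρ).trace = (starRingEnd ℂ) ((ρ * ρ).trace) := by
        rw [← mconj_mul, trace_mconj]
      have c2 : (ρ * mconj ρ).trace = (mconj ρ * ρ).trace := Matrix.trace_mul_comm _ _
      have := congrArg Complex.re expand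
      rw [c1, c2] at this
      simp only [Complex.sub_re, Complex.add_re, Complex.conj_re] at this
      rw [this]
      linarith
    have hsumsq : ∑ i, ∑ j, Complex.normSq (D i j) = 0 := by
      have : (D * D).trace.re = ∑ i, ∑ j, Complex.normSq (D i j) := by
        simp only [Matrix.trace, Matrix.diag]
        rw [Complex.re_sum]
        refine Finset.sum_congr rfl fun i _ => ?_
        rw [Matrix.mul_apply, Complex.re_sum]
        refine Finset.sum_congr rfl fun j _ => ?_
        rw [hDD j i]
        simp [mul_comm, Complex.mul_conj, Complex.normSq_conj]
      linarith [this]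
    have hD0 : D = 0 := by
      ext i j
      have hnn : ∀ i ∈ (Finset.univ : Finset (Fin d)), 0 ≤ ∑ j, Complex.normSq (D i j) :=
        fun i _ => Finset.sum_nonneg fun j _ => Complex.normSq_nonneg _
      have hrow : ∑ j, Complex.normSq (D i j) = 0 := by
        have := (Finset.sum_eq_zero_iff_of_nonneg hnn).mp hsumsq i (Finset.mem_univ i)
        exact this
      have := (Finset.sum_eq_zero_iff_of_nonneg
        (fun j _ => Complex.normSq_nonneg (D i j))).mp hrow j (Finset.mem_univ j)
      simpa [Complex.normSq_eq_zero] using this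
    have := sub_eq_zero.mp (hD ▸ hD0)
    exact this
  · -- real ⇒ equality
    have hre : reState ρ = ρ := by
      unfold reState
      rw [← heq, ← two_smul ℂ ρ, smul_smul]
      norm_num
    have hfid : fidelity ρ ρ = 1 := by
      unfold fidelity
      rw [← hsdef]
      exact hfA
    unfold MRe Mg
    rw [hre, ← heq, hfid]
    ring
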